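/- Let k be a field of characteristic 0. The quotient k-algebra k[a, c, d, e, f]/(c·e − d·f, d² − a·e, c·d − a·f, d − e² + f², a − d·e + c·f) is isomorphic, as a k-algebra, to k[c, e, f]/(c·e − e²·f + f³), via the map sending c ↦ c, e ↦ e, f ↦ f, d ↦ e² − f², and a ↦ e³ − e·f² − c·f. -/

import Mathlib

set_option maxHeartbeats 1000000
set_option synthInstance.maxHeartbeats 400000


open MvPolynomial

namespace Stmt6

variable (k : Type*) [Field k]

/-- The ideal of `k[a,c,d,e,f]` (variables indexed `a=0, c=1, d=2, e=3, f=4`) generated by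
`ce − df`, `d² − ae`, `cd − af`, `d − e² + f²`, `a − de + cf`. -/
noncomputable abbrev I₁ : Ideal (MvPolynomial (Fin 5) k) :=
  Ideal.span {X 1 * X 3 - X 2 * X 4,
    X 2 ^ 2 - X 0 * X 3,
    X 1 * X 2 - X 0 * X 4,
    X 2 - X 3 ^ 2 + X 4 ^ 2,
    X 0 - X 2 * X 3 + X 1 * X 4}

/-- The ideal of `k[c,e,f]` (variables indexed `c=0, e=1, f=2`) generated by
`ce − e²f + f³`. -/
noncomputable abbrev I₂ : Ideal (MvPolynomial (Fin 3) k) :=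
  Ideal.span {X 0 * X 1 - X 1 ^ 2 * X 2 + X 2 ^ 3}

end Stmt6

/-- Lemma 5.8 (Claim:onX), local coordinate ring at the `A₂`-singularity:
`k[a,c,d,e,f]/(ce − df, d² − ae, cd − af, d − e² + f², a − de + cf)` is isomorphic as a
`k`-algebra to `k[c,e,f]/(ce − e²f + f³)` via `c ↦ c`, `e ↦ e`, `f ↦ f`, `d ↦ e² − f²`,
`a ↦ e³ − ef² − cf`. -/
theorem stmt6 (k : Type*) [Field k] [CharZero k] :
    ∃ Φ : (MvPolynomial (Fin 5) k ⧸ Stmt6.I₁ k) ≃ₐ[k]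
        (MvPolynomial (Fin 3) k ⧸ Stmt6.I₂ k),
      ∀ p : MvPolynomial (Fin 5) k,
        Φ (Ideal.Quotient.mk (Stmt6.I₁ k) p) =
          aeval
            ![Ideal.Quotient.mk (Stmt6.I₂ k) (X 1 ^ 3 - X 1 * X 2 ^ 2 - X 0 * X 2),
              Ideal.Quotient.mk (Stmt6.I₂ k) (X 0),
              Ideal.Quotient.mk (Stmt6.I₂ k) (X 1 ^ 2 - X 2 ^ 2),
              Ideal.Quotient.mk (Stmt6.I₂ k) (X 1),
              Ideal.Quotient.mk (Stmt6.I₂ k) (X 2)] p := by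
  classical
  set mk1 := Ideal.Quotient.mkₐ k (Stmt6.I₁ k) with hmk1
  set mk2 := Ideal.Quotient.mkₐ k (Stmt6.I₂ k) with hmk2
  set v : Fin 5 → MvPolynomial (Fin 3) k ⧸ Stmt6.I₂ k :=
    ![mk2 (X 1 ^ 3 - X 1 * X 2 ^ 2 - X 0 * X 2), mk2 (X 0),
      mk2 (X 1 ^ 2 - X 2 ^ 2), mk2 (X 1), mk2 (X 2)] with hv
  have hG : Ideal.Quotient.mk (Stmt6.I₂ k)
      (X 0 * X 1 - X 1 ^ 2 * X 2 + X 2 ^ 3) = 0 :=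
    Ideal.Quotient.eq_zero_iff_mem.mpr (Ideal.subset_span rfl)
  simp only [map_add, map_sub, map_mul, map_pow] at hG
  have hker : ∀ p ∈ Stmt6.I₁ k, (aeval v) p = 0 := by
    have hle : Stmt6.I₁ k ≤ RingHom.ker (aeval v : MvPolynomial (Fin 5) k →ₐ[k] _) := by
      rw [Ideal.span_le]
      intro q hq
      simp only [Set.mem_insert_iff, Set.mem_singleton_iff] at hq
      rw [SetLike.mem_coe, RingHom.mem_ker]
      rcases hq with rfl | rfl | rfl | rfl | rfl <;>
        · simp only [map_add, map_sub, map_mul, map_pow, hv, aeval_X,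
            Matrix.cons_val_zero, Matrix.cons_val_one, Matrix.head_cons,
            Matrix.cons_val_two, Matrix.tail_cons, Matrix.cons_val_three,
            Matrix.cons_val_four, hmk2, Ideal.Quotient.mkₐ_eq_mk,
            map_sub, map_mul, map_pow]
          first
            | linear_combination hG
            | linear_combination (Ideal.Quotient.mk (Stmt6.I₂ k) (X 2)) * hG
            | linear_combination (Ideal.Quotient.mk (Stmt6.I₂ k) (X 1)) * hG
            | ring
    exact fun p hp => hle hp
  let Φ' : (MvPolynomial (Fin 5) k ⧸ Stmt6.I₁ k) →ₐ[k]
      (MvPolynomial (Fin 3) k ⧸ Stmt6.I₂ k) :=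
    Ideal.Quotient.liftₐ (Stmt6.I₁ k) (aeval v) hker
  set w : Fin 3 → MvPolynomial (Fin 5) k ⧸ Stmt6.I₁ k :=
    ![mk1 (X 1), mk1 (X 3), mk1 (X 4)] with hw
  have hgen : ∀ q ∈ ({X 1 * X 3 - X 2 * X 4,
      X 2 ^ 2 - X 0 * X 3,
      X 1 * X 2 - X 0 * X 4,
      X 2 - X 3 ^ 2 + X 4 ^ 2,
      X 0 - X 2 * X 3 + X 1 * X 4} : Set (MvPolynomial (Fin 5) k)),
      Ideal.Quotient.mk (Stmt6.I₁ k) q = 0 := fun q hq =>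
    Ideal.Quotient.eq_zero_iff_mem.mpr (Ideal.subset_span hq)
  have h1 := hgen (X 1 * X 3 - X 2 * X 4) (by simp)
  have h4 := hgen (X 2 - X 3 ^ 2 + X 4 ^ 2) (by simp)
  have h5 := hgen (X 0 - X 2 * X 3 + X 1 * X 4) (by simp)
  simp only [map_add, map_sub, map_mul, map_pow] at h1 h4 h5
  have hker2 : ∀ p ∈ Stmt6.I₂ k, (aeval w) p = 0 := by
    have hle : Stmt6.I₂ k ≤ RingHom.ker (aeval w : MvPolynomial (Fin 3) k →ₐ[k] _) := by
      rw [Ideal.span_le]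
      intro q hq
      simp only [Set.mem_singleton_iff] at hq
      subst hq
      rw [SetLike.mem_coe, RingHom.mem_ker]
      simp only [map_add, map_sub, map_mul, map_pow, hw, aeval_X,
        Matrix.cons_val_zero, Matrix.cons_val_one, Matrix.head_cons,
        Matrix.cons_val_two, Matrix.tail_cons, hmk1, Ideal.Quotient.mkₐ_eq_mk]
      linear_combination h1 + (Ideal.Quotient.mk (Stmt6.I₁ k) (X 4)) * h4
    exact fun p hp => hle hp
  let Ψ' : (MvPolynomial (Fin 3) k ⧸ Stmt6.I₂ k) →ₐ[k]
      (MvPolynomial (Fin 5) k ⧸ Stmt6.I₁ k) :=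
    Ideal.Quotient.liftₐ (Stmt6.I₂ k) (aeval w) hker2
  have hΦ' : ∀ p, Φ' (Ideal.Quotient.mk (Stmt6.I₁ k) p) = aeval v p := fun p => by
    simp [Φ', Ideal.Quotient.liftₐ_apply]
    exact Ideal.Quotient.lift_mk _ _ _
  have hΨ' : ∀ p, Ψ' (Ideal.Quotient.mk (Stmt6.I₂ k) p) = aeval w p := fun p => by
    simp [Ψ', Ideal.Quotient.liftₐ_apply]
    exact Ideal.Quotient.lift_mk _ _ _
  have hcomp1 : Φ'.comp Ψ' = AlgHom.id k _ := by
    have key : (Φ'.comp Ψ').comp mk2 = (AlgHom.id k _).comp mk2 := by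
      apply MvPolynomial.algHom_ext
      intro i
      fin_cases i <;>
        simp [hΦ', hΨ', hv, hw, hmk1, hmk2, map_sub, map_add, map_mul, map_pow]
    ext x
    obtain ⟨p, rfl⟩ := Ideal.Quotient.mk_surjective x
    simpa [hmk2] using DFunLike.congr_fun key p
  have hcomp2 : Ψ'.comp Φ' = AlgHom.id k _ := by
    have key : (Ψ'.comp Φ').comp mk1 = (AlgHom.id k _).comp mk1 := by
      apply MvPolynomial.algHom_ext
      intro i
      fin_cases i <;>
        simp [hΦ', hΨ', hv, hw, hmk1, hmk2, map_sub, map_add, map_mul, map_pow]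
      all_goals first
        | linear_combination h5 + (Ideal.Quotient.mk (Stmt6.I₁ k) (X 3)) * h4
        | linear_combination -h5 - (Ideal.Quotient.mk (Stmt6.I₁ k) (X 3)) * h4
        | linear_combination h4
        | linear_combination -h4
    ext x
    obtain ⟨p, rfl⟩ := Ideal.Quotient.mk_surjective x
    simpa [hmk1] using DFunLike.congr_fun key p
  exact ⟨AlgEquiv.ofAlgHom Φ' Ψ' hcomp1 hcomp2, fun p => hΦ' p⟩
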